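/- arXiv:1304.6937 — 2 statements merged into one kernel-verified Lean document; each statement's English description precedes it below -/
import Mathlib

section
/- The function H₁(t) = (1/2)·sinc²(t/2) + (1/4)·[sinc²((t-π)/2) + sinc²((t+π)/2)] satisfies H₁(t) ≥ 2/t² for all real t with |t| ≥ π/√3, where sinc(x) = sin(x)/x (with sinc(0)=1). -/
noncomputable def mysinc (x : ℝ) : ℝ := if x = 0 then 1 else Real.sin x / x

theorem stmt6 (t : ℝ) (ht : Real.pi / Real.sqrt 3 ≤ |t|) :
    2 / t ^ 2 ≤
      (1 / 2) * mysinc (t / 2) ^ 2 +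
        (1 / 4) * (mysinc ((t - Real.pi) / 2) ^ 2 + mysinc ((t + Real.pi) / 2) ^ 2) := by
  have hpi := Real.pi_pos
  have hs3 : (0:ℝ) < Real.sqrt 3 := by positivity
  have ht0 : t ≠ 0 := by
    intro h
    rw [h, abs_zero] at ht
    have : (0:ℝ) < Real.pi / Real.sqrt 3 := by positivity
    linarith
  have ht2 : Real.pi ^ 2 / 3 ≤ t ^ 2 := by
    have h1 : (Real.pi / Real.sqrt 3) ^ 2 ≤ |t| ^ 2 := by
      apply pow_le_pow_left₀ (by positivity) ht
    rw [sq_abs] at h1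
    calc Real.pi ^ 2 / 3 = (Real.pi / Real.sqrt 3) ^ 2 := by
          rw [div_pow, Real.sq_sqrt (by norm_num)]
      _ ≤ t ^ 2 := h1
  by_cases hp : t = Real.pi
  · subst hp
    have h1 : mysinc (Real.pi / 2) = 2 / Real.pi := by
      unfold mysinc
      rw [if_neg (by positivity), Real.sin_pi_div_two]
      field_simp
    have h2 : mysinc ((Real.pi - Real.pi) / 2) = 1 := by
      unfold mysinc; rw [if_pos (by ring)]
    have h3 : mysinc ((Real.pi + Real.pi) / 2) = 0 := by
      unfold mysinc
      rw [if_neg (by positivity)]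
      have : (Real.pi + Real.pi) / 2 = Real.pi := by ring
      rw [this, Real.sin_pi, zero_div]
    rw [h1, h2, h3]
    have : (2 / Real.pi) ^ 2 = 4 / Real.pi ^ 2 := by rw [div_pow]; norm_num
    rw [this]
    rw [div_le_iff₀ (by positivity)]
    have : (1 / 2 * (4 / Real.pi ^ 2) + 1 / 4 * (1 ^ 2 + 0 ^ 2)) * Real.pi ^ 2
        = 2 + Real.pi ^ 2 / 4 := by field_simp; ring
    nlinarith [sq_nonneg Real.pi]
  by_cases hm : t = -Real.pi
  · subst hm
    have h1 : mysinc (-Real.pi / 2) = 2 / Real.pi := by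
      unfold mysinc
      rw [if_neg (by simp)]
      have : -Real.pi / 2 = -(Real.pi/2) := by ring
      rw [this, Real.sin_neg, Real.sin_pi_div_two]
      field_simp
    have h2 : mysinc ((-Real.pi - Real.pi) / 2) = 0 := by
      unfold mysinc
      rw [if_neg (show (-Real.pi - Real.pi) / 2 ≠ 0 by intro h; nlinarith [Real.pi_pos])]
      have : (-Real.pi - Real.pi) / 2 = -Real.pi := by ring
      rw [this, Real.sin_neg, Real.sin_pi, neg_zero, zero_div]
    have h3 : mysinc ((-Real.pi + Real.pi) / 2) = 1 := by
      unfold mysinc; rw [if_pos (by ring)]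
    rw [h1, h2, h3]
    have : (2 / Real.pi) ^ 2 = 4 / Real.pi ^ 2 := by rw [div_pow]; norm_num
    rw [this]
    have hp2 : (-Real.pi) ^ 2 = Real.pi ^ 2 := by ring
    rw [hp2, div_le_iff₀ (by positivity)]
    have : (1 / 2 * (4 / Real.pi ^ 2) + 1 / 4 * (0 ^ 2 + 1 ^ 2)) * Real.pi ^ 2
        = 2 + Real.pi ^ 2 / 4 := by field_simp; ring
    nlinarith [sq_nonneg Real.pi]
  -- general case
  have e1 : mysinc (t / 2) = Real.sin (t/2) / (t/2) := by
    unfold mysinc; rw [if_neg (by simpa using ht0)]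
  have e2 : mysinc ((t - Real.pi) / 2) = -Real.cos (t/2) / ((t - Real.pi)/2) := by
    unfold mysinc
    rw [if_neg (by
      intro h
      apply hp
      have := div_eq_zero_iff.mp h
      rcases this with h | h
      · linarith [sub_eq_zero.mp h]
      · norm_num at h)]
    have : (t - Real.pi) / 2 = t/2 - Real.pi/2 := by ring
    rw [this, Real.sin_sub_pi_div_two]
  have e3 : mysinc ((t + Real.pi) / 2) = Real.cos (t/2) / ((t + Real.pi)/2) := by
    unfold mysinc
    rw [if_neg (by
      intro h
      apply hm
      have := div_eq_zero_iff.mp h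
      rcases this with h | h
      · linarith [add_eq_zero_iff_eq_neg.mp h]
      · norm_num at h)]
    have : (t + Real.pi) / 2 = t/2 + Real.pi/2 := by ring
    rw [this, Real.sin_add_pi_div_two]
  rw [e1, e2, e3]
  set s := Real.sin (t/2)
  set c := Real.cos (t/2)
  have hsc : s ^ 2 + c ^ 2 = 1 := Real.sin_sq_add_cos_sq (t/2)
  have hmp : t - Real.pi ≠ 0 := sub_ne_zero.mpr hp
  have hpp : t + Real.pi ≠ 0 := by
    intro h; apply hm; linarith
  have key : (1 / 2) * (s / (t/2)) ^ 2 +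
        (1 / 4) * ((-c / ((t - Real.pi)/2)) ^ 2 + (c / ((t + Real.pi)/2)) ^ 2)
      - 2 / t ^ 2
      = 2 * c ^ 2 * (3 * Real.pi ^ 2 * t ^ 2 - Real.pi ^ 4)
        / (t ^ 2 * (t - Real.pi) ^ 2 * (t + Real.pi) ^ 2) := by
    have hs2 : s ^ 2 = 1 - c ^ 2 := by linarith
    rw [div_pow, hs2]
    field_simp
    ring
  have hnum : 0 ≤ 2 * c ^ 2 * (3 * Real.pi ^ 2 * t ^ 2 - Real.pi ^ 4) := by
    apply mul_nonneg (by positivity)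
    nlinarith [ht2, sq_nonneg Real.pi]
  have hden : 0 < t ^ 2 * (t - Real.pi) ^ 2 * (t + Real.pi) ^ 2 := by positivity
  have := div_nonneg hnum hden.le
  linarith [key ▸ this]
end

section
/- For 0 ≤ λ ≤ 1 and 0 ≤ x ≤ 1, the inequality √(1 - λx) ≤ ((1+λ)/2)·√(1-x)·(1 + ((1-λ)/(1+λ))·1/(1-x)) holds (for x < 1). -/
theorem stmt7 (lam x : ℝ) (h0 : 0 ≤ lam) (h1 : lam ≤ 1) (hx0 : 0 ≤ x) (hx1 : x < 1) :
    Real.sqrt (1 - lam * x) ≤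
      ((1 + lam) / 2) * Real.sqrt (1 - x) * (1 + ((1 - lam) / (1 + lam)) * (1 / (1 - x))) := by
  have hx : (0:ℝ) < 1 - x := by linarith
  have hs : 0 < Real.sqrt (1 - x) := Real.sqrt_pos.mpr hx
  have ha : (0:ℝ) ≤ 1 - lam * x := by nlinarith
  have hsa := Real.sq_sqrt ha
  have hsb := Real.sq_sqrt hx.le
  have hl : (0:ℝ) < 1 + lam := by linarith
  have expand : ((1 + lam) / 2) * Real.sqrt (1 - x) * (1 + ((1 - lam) / (1 + lam)) * (1 / (1 - x)))
      = (2 - (1 + lam) * x) / (2 * Real.sqrt (1 - x)) := by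
    field_simp
    linear_combination (2*(1+lam)*((1+lam)*(1-x)+(1-lam)) + (-2 - 4*lam + 3*lam*x + 2*lam^2*x + x)) * hsb
  have key : Real.sqrt (1 - lam * x) * Real.sqrt (1 - x) ≤ (2 - (1 + lam) * x) / 2 := by
    nlinarith [sq_nonneg (Real.sqrt (1 - lam * x) - Real.sqrt (1 - x))]
  rw [expand, le_div_iff₀ (by positivity)]
  nlinarith [key]
end
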